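/- Consider the five polynomial vector fields on ℝ^5 (with coordinates (X,Y,U1,U2,U3)): η_1 = (6X, 5Y, 4U1, 3U2, 2U3); η_2 = (4U3·Y+2U1·U2, X, −5Y−3U2·U3, −3U1, −4U2); η_3 = ((4/3)U2·Y, −(1/9)U3·Y, X+(1/9)U1·U3, −(5/3)Y, −(2/3)U1+(2/9)U3²); η_4 = ((3/2)U1·Y, −(1/4)U2·Y, −2U3·Y, X+(1/4)U2², −(5/2)Y); η_5 = ((5/3)Y²+(1/9)U2·U3·Y, (−(2/9)U1+(2/27)U3²)Y, −(4/3)U2·Y+(2/9)U1²−(2/27)U1·U3², −(2/9)U3·Y, X+(5/9)U1·U3−(4/27)U3³). Then the determinant of the 5×5 matrix over ℝ[X,Y,U1,U2,U3] whose i-th row is η_i is a nonzero polynomial; in particular η_1,…,η_5 are linearly independent over the ring of polynomial functions on ℝ^5. -/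

import Mathlib

open MvPolynomial

/-- The matrix over `ℝ[X,Y,U1,U2,U3]` (variables indexed `0,1,2,3,4`) whose rows are the
five generators `η₁,…,η₅` of `Lift(F₃₂)`. -/
noncomputable def liftF32Matrix : Matrix (Fin 5) (Fin 5) (MvPolynomial (Fin 5) ℝ) :=
  !![C (6:ℝ) * X 0, C (5:ℝ) * X 1, C (4:ℝ) * X 2, C (3:ℝ) * X 3, C (2:ℝ) * X 4;
     C (4:ℝ) * X 4 * X 1 + C (2:ℝ) * X 2 * X 3, X 0,
       C (-5:ℝ) * X 1 - C (3:ℝ) * X 3 * X 4, C (-3:ℝ) * X 2, C (-4:ℝ) * X 3;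
     C ((4/3):ℝ) * X 3 * X 1, C (-(1/9):ℝ) * X 4 * X 1, X 0 + C ((1/9):ℝ) * X 2 * X 4,
       C (-(5/3):ℝ) * X 1, C (-(2/3):ℝ) * X 2 + C ((2/9):ℝ) * (X 4)^2;
     C ((3/2):ℝ) * X 2 * X 1, C (-(1/4):ℝ) * X 3 * X 1, C (-2:ℝ) * X 4 * X 1,
       X 0 + C ((1/4):ℝ) * (X 3)^2, C (-(5/2):ℝ) * X 1;
     C ((5/3):ℝ) * (X 1)^2 + C ((1/9):ℝ) * X 3 * X 4 * X 1,
       (C (-(2/9):ℝ) * X 2 + C ((2/27):ℝ) * (X 4)^2) * X 1,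
       C (-(4/3):ℝ) * X 3 * X 1 + C ((2/9):ℝ) * (X 2)^2 - C ((2/27):ℝ) * X 2 * (X 4)^2,
       C (-(2/9):ℝ) * X 4 * X 1,
       X 0 + C ((5/9):ℝ) * X 2 * X 4 + C (-(4/27):ℝ) * (X 4)^3]

set_option maxRecDepth 4000 in
/-- The determinant of the matrix whose rows are the five generators of `Lift(F₃₂)` is a
nonzero polynomial; in particular `η₁,…,η₅` are linearly independent over the polynomial
ring. -/
theorem det_liftF32Matrix_ne_zero : liftF32Matrix.det ≠ 0 := by
  intro h
  have hM : liftF32Matrix.map (eval (fun i : Fin 5 => if i = 0 then (1:ℝ) else 0)) =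
      !![6,0,0,0,0; 0,1,0,0,0; 0,0,1,0,0; 0,0,0,1,0; 0,0,0,0,1] := by
    rw [← Matrix.ext_iff]
    simp only [Fin.forall_iff_succ, IsEmpty.forall_iff, and_true, Matrix.map_apply, liftF32Matrix,
      Matrix.cons_val', Matrix.cons_val_zero, Matrix.cons_val_succ, Matrix.of_apply,
      Matrix.empty_val', Matrix.cons_val_fin_one]
    norm_num [show ((2:Fin 5) = 0) = False by decide, show ((3:Fin 5) = 0) = False by decide,
      show ((4:Fin 5) = 0) = False by decide]
  have h2 : (Matrix.det !![(6:ℝ),0,0,0,0; 0,1,0,0,0; 0,0,1,0,0; 0,0,0,1,0; 0,0,0,0,1]) = 0 := by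
    rw [← hM, ← RingHom.coe_coe, ← RingHom.mapMatrix_apply, ← RingHom.map_det, h, map_zero]
  simp [Matrix.det_succ_row_zero, Fin.sum_univ_succ] at h2
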